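/- arXiv:1901.09000 — 3 statements merged into one kernel-verified Lean document; each statement's English description precedes it below -/
import Mathlib

section
/- Let g : ℝ≥0 → ℝ≥0 be a non-increasing function with limit g_∞ = lim_{s→∞} g(s). Then for every r ∈ ℝ, the averaged integral (1/Vol B(R)) ∫_{x ∈ B(R)} g((d⁻_R(x) − r)⁺) dx converges to g_∞ as R → ∞, where B(R) = [−R,R]^d and d⁻_R(x) is the distance from x to ∂B(R), and (·)⁺ denotes the positive part. -/
open MeasureTheory Filter Topology Metric

/-- The cube `[-R,R]^d` in Euclidean space. -/
def cube (d : ℕ) (R : ℝ) : Set (EuclideanSpace ℝ (Fin d)) := {x | ∀ i, |x i| ≤ R}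

lemma mc_volume_cube (d : ℕ) (R : ℝ) (h : 0 ≤ R) :
    volume (cube d R) = ENNReal.ofReal ((2*R)^d) := by
  have hpre : cube d R
      = (MeasurableEquiv.toLp 2 (Fin d → ℝ)).symm ⁻¹' (Set.univ.pi fun _ => Set.Icc (-R) R) := by
    ext x
    simp [cube, abs_le, Set.mem_pi, Pi.le_def, forall_and]
  rw [hpre, (EuclideanSpace.volume_preserving_symm_measurableEquiv_toLp (Fin d)).measure_preimage
    ((MeasurableSet.univ_pi fun _ => measurableSet_Icc).nullMeasurableSet)]
  rw [volume_pi_pi]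
  simp only [Real.volume_Icc]
  rw [Finset.prod_const, Finset.card_univ, Fintype.card_fin,
    show R - -R = 2*R by ring, ← ENNReal.ofReal_pow (by linarith : (0:ℝ) ≤ 2*R)]

lemma mc_coord_le_dist (d : ℕ) (x y : EuclideanSpace ℝ (Fin d)) (i : Fin d) :
    |x i - y i| ≤ dist x y := by
  rw [EuclideanSpace.dist_eq]
  rw [show |x i - y i| = Real.sqrt (dist (x i) (y i)^2) by
    rw [Real.dist_eq, Real.sqrt_sq_eq_abs, abs_abs]]
  apply Real.sqrt_le_sqrt
  exact Finset.single_le_sum (f := fun j => dist (x j) (y j)^2)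
    (fun j _ => sq_nonneg _) (Finset.mem_univ i)

lemma mc_isClosed_cube (d : ℕ) (R : ℝ) : IsClosed (cube d R) := by
  have : cube d R = ⋂ i, (fun x : EuclideanSpace ℝ (Fin d) => x i) ⁻¹' {t | |t| ≤ R} := by
    ext x; simp [cube]
  rw [this]
  exact isClosed_iInter fun i =>
    (isClosed_le (by fun_prop) continuous_const).preimage (EuclideanSpace.proj i).continuous

lemma mc_frontier_cube_nonempty (d : ℕ) (hd : 1 ≤ d) (R : ℝ) (hR : 0 < R) :
    (frontier (cube d R)).Nonempty := by
  set i0 : Fin d := ⟨0, hd⟩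
  set y₀ : EuclideanSpace ℝ (Fin d) := WithLp.toLp 2 (fun _ => R) with hy₀
  refine ⟨y₀, ?_⟩
  rw [frontier_eq_closure_inter_closure]
  constructor
  · exact subset_closure (fun i => by simp [hy₀, abs_of_pos hR])
  · rw [Metric.mem_closure_iff]
    intro ε hε
    refine ⟨y₀ + (ε/2) • EuclideanSpace.single i0 (1:ℝ), ?_, ?_⟩
    · intro h
      have := h i0
      simp only [hy₀, PiLp.add_apply, PiLp.smul_apply, EuclideanSpace.single_apply,
        if_pos rfl, if_true, smul_eq_mul, mul_one] at this
      rw [abs_of_pos (by linarith)] at this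
      linarith
    · rw [dist_eq_norm, sub_add_cancel_left, norm_neg, norm_smul, EuclideanSpace.norm_single,
        Real.norm_eq_abs, abs_of_pos (by linarith), norm_one, mul_one]
      linarith

lemma mc_frontier_coord (d : ℕ) (R : ℝ) (y : EuclideanSpace ℝ (Fin d))
    (hy : y ∈ frontier (cube d R)) : ∃ i, R ≤ |y i| := by
  by_contra h
  push_neg at h
  have hopen : IsOpen {x : EuclideanSpace ℝ (Fin d) | ∀ i, |x i| < R} := by
    have : {x : EuclideanSpace ℝ (Fin d) | ∀ i, |x i| < R}
        = ⋂ i, (fun x : EuclideanSpace ℝ (Fin d) => x i) ⁻¹' {t | |t| < R} := by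
      ext x; simp
    rw [this]
    exact isOpen_iInter_of_finite fun i =>
      (isOpen_lt (by fun_prop) continuous_const).preimage (EuclideanSpace.proj i).continuous
  have hsub : {x : EuclideanSpace ℝ (Fin d) | ∀ i, |x i| < R} ⊆ interior (cube d R) :=
    interior_maximal (fun x hx i => (hx i).le) hopen
  exact hy.2 (hsub h)

lemma mc_infDist_ge (d : ℕ) (hd : 1 ≤ d) (R R' : ℝ) (hR : 0 < R) (hR' : R' ≤ R)
    (x : EuclideanSpace ℝ (Fin d)) (hx : ∀ i, |x i| ≤ R') :
    R - R' ≤ Metric.infDist x (frontier (cube d R)) := by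
  by_contra h
  push_neg at h
  obtain ⟨y, hy, hdist⟩ :=
    (Metric.infDist_lt_iff (mc_frontier_cube_nonempty d hd R hR)).1 h
  obtain ⟨i, hi⟩ := mc_frontier_coord d R y hy
  have h1 : |y i - x i| ≤ dist y x := mc_coord_le_dist d y x i
  have h2 : |y i| - |x i| ≤ |y i - x i| := abs_sub_abs_le_abs_sub _ _
  rw [dist_comm] at h1
  have := hx i
  linarith

lemma mc_sqrt_atTop : Tendsto Real.sqrt atTop atTop := by
  apply tendsto_atTop_atTop_of_monotone (fun a b h => Real.sqrt_le_sqrt h)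
  intro b
  exact ⟨b^2, by rw [Real.sqrt_sq_eq_abs]; exact le_abs_self b⟩

/-- Lemma: for a non-increasing `g : [0,∞) → [0,∞)` with limit `g∞` at infinity,
the average over the cube `B(R) = [-R,R]^d` of `g((d⁻_R(x) - r)⁺)` converges to `g∞`,
where `d⁻_R(x)` is the distance from `x` to `∂B(R)`. -/
theorem mean_conservation_stmt0 (d : ℕ) (hd : 1 ≤ d)
    (g : ℝ → ℝ) (hg0 : ∀ s, 0 ≤ s → 0 ≤ g s) (hanti : AntitoneOn g (Set.Ici 0))
    (ginf : ℝ) (hlim : Tendsto g atTop (𝓝 ginf)) (r : ℝ) :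
    Tendsto (fun R : ℝ =>
        (∫ x in cube d R, g (max (Metric.infDist x (frontier (cube d R)) - r) 0)) / (2 * R) ^ d)
      atTop (𝓝 ginf) := by
  -- basic facts about g
  have hginf_le : ∀ s, 0 ≤ s → ginf ≤ g s := fun s hs =>
    le_of_tendsto hlim (eventually_atTop.2 ⟨s, fun t ht => hanti hs (hs.trans ht) ht⟩)
  set G : ℝ → ℝ := fun s => g (max s 0) with hG
  have hGanti : Antitone G := fun s t h =>
    hanti (le_max_right s 0) (le_max_right t 0) (max_le_max h le_rfl)
  have hGmeas : Measurable G := hGanti.measurable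
  -- integrand and its properties
  set f : ℝ → EuclideanSpace ℝ (Fin d) → ℝ :=
    fun R x => g (max (Metric.infDist x (frontier (cube d R)) - r) 0) with hf
  have hfG : ∀ R x, f R x = G (Metric.infDist x (frontier (cube d R)) - r) := fun R x => rfl
  have hfmeas : ∀ R, Measurable (f R) := by
    intro R
    have : f R = G ∘ (fun x => Metric.infDist x (frontier (cube d R)) - r) := rfl
    rw [this]
    exact hGmeas.comp ((Metric.continuous_infDist_pt _).sub continuous_const).measurable
  have hf_nonneg : ∀ R x, 0 ≤ f R x := fun R x => hg0 _ (le_max_right _ _)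
  have hf_le_g0 : ∀ R x, f R x ≤ g 0 := fun R x =>
    hanti (Set.mem_Ici.2 le_rfl) (Set.mem_Ici.2 (le_max_right _ _)) (le_max_right _ _)
  have hvol_lt_top : ∀ R : ℝ, 0 ≤ R → volume (cube d R) < ⊤ := by
    intro R hR; rw [mc_volume_cube d R hR]; exact ENNReal.ofReal_lt_top
  have hint : ∀ R : ℝ, 0 ≤ R → IntegrableOn (f R) (cube d R) := by
    intro R hR
    haveI : IsFiniteMeasure (volume.restrict (cube d R)) :=
      ⟨by rw [Measure.restrict_apply_univ]; exact hvol_lt_top R hR⟩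
    refine ⟨(hfmeas R).aestronglyMeasurable, ?_⟩
    apply HasFiniteIntegral.of_bounded (C := g 0)
    filter_upwards with x
    rw [Real.norm_eq_abs, abs_of_nonneg (hf_nonneg R x)]
    exact hf_le_g0 R x
  -- the upper comparison function
  set q : ℝ → ℝ := fun R => ((R - r - Real.sqrt R)/R)^d with hq
  set u : ℝ → ℝ := fun R => g (Real.sqrt R) * q R + g 0 * (1 - q R) with hu
  -- q tends to 1
  have hqlim : Tendsto q atTop (𝓝 1) := by
    have hb : Tendsto (fun R : ℝ => 1 - r * R⁻¹ - (Real.sqrt R)⁻¹) atTop (𝓝 1) := by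
      have h1 : Tendsto (fun R : ℝ => r * R⁻¹) atTop (𝓝 0) := by
        simpa using tendsto_inv_atTop_zero.const_mul r
      have h2 : Tendsto (fun R : ℝ => (Real.sqrt R)⁻¹) atTop (𝓝 0) :=
        tendsto_inv_atTop_zero.comp mc_sqrt_atTop
      simpa using (tendsto_const_nhds.sub h1).sub h2
    have heq : ∀ᶠ R : ℝ in atTop, (1 - r * R⁻¹ - (Real.sqrt R)⁻¹)^d = q R := by
      filter_upwards [eventually_ge_atTop (1:ℝ)] with R hR1
      have hRpos : (0:ℝ) < R := by linarith
      have hsq : Real.sqrt R ≠ 0 := by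
        have : (1:ℝ) ≤ Real.sqrt R := by
          rw [show (1:ℝ) = Real.sqrt 1 by simp]; exact Real.sqrt_le_sqrt hR1
        linarith
      have hkey : (R - r - Real.sqrt R)/R = 1 - r * R⁻¹ - (Real.sqrt R)⁻¹ := by
        rw [show (Real.sqrt R)⁻¹ = Real.sqrt R / R by
          rw [eq_div_iff hRpos.ne']
          field_simp
          rw [Real.sq_sqrt hRpos.le]]
        field_simp
      show (1 - r * R⁻¹ - (Real.sqrt R)⁻¹)^d = ((R - r - Real.sqrt R)/R)^d
      rw [hkey]
    have := hb.pow d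
    rw [one_pow] at this
    exact this.congr' heq
  -- u tends to ginf
  have hulim : Tendsto u atTop (𝓝 ginf) := by
    have h1 : Tendsto (fun R => g (Real.sqrt R)) atTop (𝓝 ginf) := hlim.comp mc_sqrt_atTop
    have := (h1.mul hqlim).add ((tendsto_const_nhds (x := g 0)).mul
      ((tendsto_const_nhds (x := (1:ℝ))).sub hqlim))
    simpa using this
  -- squeeze
  apply tendsto_of_tendsto_of_tendsto_of_le_of_le' tendsto_const_nhds hulim
  -- lower bound
  · filter_upwards [eventually_ge_atTop (1:ℝ)] with R hR1
    have hRpos : (0:ℝ) < R := by linarith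
    have hDpos : (0:ℝ) < (2*R)^d := by positivity
    rw [le_div_iff₀ hDpos]
    have hconst : ∫ _ in cube d R, ginf ∂volume = ginf * (2*R)^d := by
      rw [setIntegral_const, measureReal_def, mc_volume_cube d R hRpos.le,
        ENNReal.toReal_ofReal (by positivity), smul_eq_mul, mul_comm]
    calc ginf * (2*R)^d = ∫ _ in cube d R, ginf ∂volume := hconst.symm
      _ ≤ ∫ x in cube d R, f R x ∂volume := by
          apply setIntegral_mono_on
          · exact integrableOn_const (hvol_lt_top R hRpos.le).ne
          · exact hint R hRpos.le
          · exact (mc_isClosed_cube d R).measurableSet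
          · intro x _
            exact hginf_le _ (le_max_right _ _)
  -- upper bound
  · filter_upwards [eventually_ge_atTop (4:ℝ), eventually_ge_atTop ((|r|+2)^2)] with R hR4 hRr
    have hRpos : (0:ℝ) < R := by linarith [abs_nonneg r, sq_nonneg (|r|+2)]
    set S := Real.sqrt R with hS
    have hSnonneg : 0 ≤ S := Real.sqrt_nonneg R
    have hS_le : S ≤ R/2 := by
      rw [hS]
      nlinarith [Real.sq_sqrt hRpos.le, Real.sqrt_nonneg R,
        Real.sqrt_le_sqrt (show R ≤ (R/2)^2 by nlinarith), Real.sqrt_sq (by linarith : (0:ℝ) ≤ R/2)]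
    have hrS : |r| + 2 ≤ S := by
      rw [hS, show |r| + 2 = Real.sqrt ((|r|+2)^2) from
        (Real.sqrt_sq (by positivity)).symm]
      exact Real.sqrt_le_sqrt hRr
    have hr1 : -S ≤ r := by linarith [neg_le_abs r, neg_abs_le r]
    have hr2 : r ≤ S := by linarith [le_abs_self r]
    set R' := R - r - S with hR'
    have hR'nonneg : 0 ≤ R' := by rw [hR']; linarith
    have hR'le : R' ≤ R := by rw [hR']; linarith
    have hsub : cube d R' ⊆ cube d R := fun x hx i => (hx i).trans hR'le
    have hDpos : (0:ℝ) < (2*R)^d := by positivity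
    -- split the integral
    have hmeas' : MeasurableSet (cube d R') := (mc_isClosed_cube d R').measurableSet
    have hmeasR : MeasurableSet (cube d R) := (mc_isClosed_cube d R).measurableSet
    have hint1 : IntegrableOn (f R) (cube d R') := (hint R hRpos.le).mono_set hsub
    have hint2 : IntegrableOn (f R) (cube d R \ cube d R') :=
      (hint R hRpos.le).mono_set Set.diff_subset
    have hsplit : ∫ x in cube d R, f R x ∂volume
        = (∫ x in cube d R', f R x ∂volume) + ∫ x in cube d R \ cube d R', f R x ∂volume := by
      rw [← setIntegral_union disjoint_sdiff_self_right (hmeasR.diff hmeas') hint1 hint2,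
        Set.union_diff_cancel hsub]
    -- bound on the inner cube
    have hbound1 : ∫ x in cube d R', f R x ∂volume ≤ g S * (2*R')^d := by
      calc ∫ x in cube d R', f R x ∂volume ≤ ∫ _ in cube d R', g S ∂volume := by
            apply setIntegral_mono_on hint1
              (integrableOn_const (hvol_lt_top R' hR'nonneg).ne) hmeas'
            intro x hx
            have hdist : R - R' ≤ Metric.infDist x (frontier (cube d R)) :=
              mc_infDist_ge d hd R R' hRpos hR'le x hx
            have hRR' : R - R' = r + S := by rw [hR']; ring
            have hge : S ≤ max (Metric.infDist x (frontier (cube d R)) - r) 0 := by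
              refine le_trans ?_ (le_max_left _ _)
              linarith [hdist, hRR'.symm.le]
            exact hanti hSnonneg (hSnonneg.trans hge) hge
        _ = g S * (2*R')^d := by
            rw [setIntegral_const, measureReal_def, mc_volume_cube d R' hR'nonneg,
              ENNReal.toReal_ofReal (by positivity), smul_eq_mul, mul_comm]
    -- bound on the shell
    have hvoldiff : (volume (cube d R \ cube d R')).toReal = (2*R)^d - (2*R')^d := by
      rw [measure_diff hsub hmeas'.nullMeasurableSet (hvol_lt_top R' hR'nonneg).ne,
        mc_volume_cube d R hRpos.le, mc_volume_cube d R' hR'nonneg,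
        ← ENNReal.ofReal_sub _ (by positivity), ENNReal.toReal_ofReal]
      have : (2*R')^d ≤ (2*R)^d := pow_le_pow_left₀ (by linarith) (by linarith) d
      linarith
    have hbound2 : ∫ x in cube d R \ cube d R', f R x ∂volume
        ≤ g 0 * ((2*R)^d - (2*R')^d) := by
      calc ∫ x in cube d R \ cube d R', f R x ∂volume
          ≤ ∫ _ in cube d R \ cube d R', g 0 ∂volume := by
            apply setIntegral_mono_on hint2
              (integrableOn_const
                ((measure_mono Set.diff_subset).trans_lt (hvol_lt_top R hRpos.le)).ne) 
              (hmeasR.diff hmeas')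
            intro x _
            exact hf_le_g0 R x
        _ = g 0 * ((2*R)^d - (2*R')^d) := by
            rw [setIntegral_const, measureReal_def, smul_eq_mul, hvoldiff, mul_comm]
    -- combine
    have hq_eq : (2*R')^d = (2*R)^d * q R := by
      show (2*R')^d = (2*R)^d * ((R - r - Real.sqrt R)/R)^d
      rw [← mul_pow]
      congr 1
      rw [← hS, ← hR']
      field_simp
    rw [div_le_iff₀ hDpos]
    calc ∫ x in cube d R, f R x ∂volume
        ≤ g S * (2*R')^d + g 0 * ((2*R)^d - (2*R')^d) := by
          rw [hsplit]; exact add_le_add hbound1 hbound2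
      _ = u R * (2*R)^d := by
          show _ = (g (Real.sqrt R) * q R + g 0 * (1 - q R)) * (2*R)^d
          rw [show (2*R')^d = (2*R)^d * q R from hq_eq]
          ring
end

section
/- Let B ⊆ [−R,R]^d be a finite union of unit lattice cubes k + [0,1]^d (k ∈ ℤ^d), and let A ⊆ B be a closed set. Then the number of connected components of [−R,R]^d \ A that are not contained in B is at most Vol(B) + c·R^{d−1}, for an absolute constant c depending only on d. -/
open MeasureTheory

/-- The unit lattice cube `k + [0,1]^d`. -/
def latticeCube (d : ℕ) (k : Fin d → ℤ) : Set (EuclideanSpace ℝ (Fin d)) :=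
  {x | ∀ i, (k i : ℝ) ≤ x i ∧ x i ≤ (k i : ℝ) + 1}

open Set

def oCell (d : ℕ) (k : Fin d → ℤ) : Set (EuclideanSpace ℝ (Fin d)) :=
  {x | ∀ i, (k i : ℝ) < x i ∧ x i < (k i : ℝ) + 1}

/-- the `1 × ⋯ × 2 × ⋯ × 1` open double box in direction `i0` -/
def dBox (d : ℕ) (i0 : Fin d) (k : Fin d → ℤ) : Set (EuclideanSpace ℝ (Fin d)) :=
  {x | ∀ i, (k i : ℝ) < x i ∧ x i < (k i : ℝ) + (if i = i0 then 2 else 1)}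

lemma oCell_subset_dBox (d : ℕ) (i0 : Fin d) (k : Fin d → ℤ) :
    oCell d k ⊆ dBox d i0 k := by
  intro x hx i
  refine ⟨(hx i).1, lt_of_lt_of_le (hx i).2 ?_⟩
  by_cases h : i = i0 <;> simp [h]

lemma oCell_shift_subset_dBox (d : ℕ) (i0 : Fin d) (k : Fin d → ℤ) :
    oCell d (Function.update k i0 (k i0 + 1)) ⊆ dBox d i0 k := by
  intro x hx i
  by_cases h : i = i0
  · subst h
    have h' := hx i
    rw [Function.update_self] at h'
    push_cast at h'
    have hif : (if i = i then (2:ℝ) else 1) = 2 := if_pos rfl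
    rw [hif]
    exact ⟨by linarith [h'.1], by linarith [h'.2]⟩
  · have := hx i
    rw [Function.update_of_ne h] at this
    simp only [if_neg h]
    exact this

lemma notMem_B_of_oCell {d : ℕ} {I : Finset (Fin d → ℤ)} {k : Fin d → ℤ}
    (hk : k ∉ I) {x : EuclideanSpace ℝ (Fin d)} (hx : x ∈ oCell d k) :
    x ∉ ⋃ m ∈ I, latticeCube d m := by
  intro hxB
  rw [Set.mem_iUnion₂] at hxB
  obtain ⟨m, hm, hxm⟩ := hxB
  have : m = k := by
    funext i
    have h1 := (hxm i).1
    have h2 := (hxm i).2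
    have h3 := (hx i).1
    have h4 := (hx i).2
    have e1 : (m i : ℝ) < (k i : ℝ) + 1 := lt_of_le_of_lt h1 h4
    have e2 : (k i : ℝ) < (m i : ℝ) + 1 := lt_of_lt_of_le h3 h2
    have e1' : m i < k i + 1 := by exact_mod_cast e1
    have e2' : k i < m i + 1 := by exact_mod_cast e2
    omega
  exact hk (this ▸ hm)

lemma notMem_B_of_dBox {d : ℕ} {I : Finset (Fin d → ℤ)} {i0 : Fin d} {k : Fin d → ℤ}
    (hk : k ∉ I) (hk' : Function.update k i0 (k i0 + 1) ∉ I)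
    {x : EuclideanSpace ℝ (Fin d)} (hx : x ∈ dBox d i0 k) :
    x ∉ ⋃ m ∈ I, latticeCube d m := by
  intro hxB
  rw [Set.mem_iUnion₂] at hxB
  obtain ⟨m, hm, hxm⟩ := hxB
  have key : ∀ i, i ≠ i0 → m i = k i := by
    intro i hi
    have h1 := (hxm i).1
    have h2 := (hxm i).2
    have h3 := (hx i).1
    have h4 := (hx i).2
    rw [if_neg hi] at h4
    have e1' : m i < k i + 1 := by exact_mod_cast lt_of_le_of_lt h1 h4
    have e2' : k i < m i + 1 := by exact_mod_cast lt_of_lt_of_le h3 h2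
    omega
  have h1 := (hxm i0).1
  have h2 := (hxm i0).2
  have h3 := (hx i0).1
  have h4 := (hx i0).2
  rw [if_pos rfl] at h4
  have e1' : m i0 < k i0 + 2 := by exact_mod_cast lt_of_le_of_lt h1 h4
  have e2' : k i0 < m i0 + 1 := by exact_mod_cast lt_of_lt_of_le h3 h2
  have : m i0 = k i0 ∨ m i0 = k i0 + 1 := by omega
  rcases this with h | h
  · apply hk
    have : m = k := by
      funext i
      by_cases hi : i = i0
      · rw [hi, h]
      · exact key i hi
    exact this ▸ hm
  · apply hk'
    have : m = Function.update k i0 (k i0 + 1) := by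
      funext i
      by_cases hi : i = i0
      · rw [hi, Function.update_self, ← h]
      · rw [Function.update_of_ne hi]; exact key i hi
    exact this ▸ hm

lemma convex_dBox (d : ℕ) (i0 : Fin d) (k : Fin d → ℤ) : Convex ℝ (dBox d i0 k) := by
  have : dBox d i0 k = ⋂ i, (EuclideanSpace.proj i : EuclideanSpace ℝ (Fin d) →L[ℝ] ℝ) ⁻¹'
      (Set.Ioo (k i : ℝ) ((k i : ℝ) + if i = i0 then 2 else 1)) := by
    ext x
    simp only [dBox, Set.mem_setOf_eq, Set.mem_iInter, Set.mem_preimage, Set.mem_Ioo]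
    rfl
  rw [this]
  exact convex_iInter fun i =>
    (convex_Ioo _ _).linear_preimage (EuclideanSpace.proj i : _ →L[ℝ] _).toLinearMap

lemma latticeCube_subset_cube {d : ℕ} {R : ℝ} {k : Fin d → ℤ}
    (h : ∀ i, (-R : ℝ) ≤ k i ∧ (k i : ℝ) + 1 ≤ R) : latticeCube d k ⊆ cube d R := by
  intro x hx i
  rw [abs_le]
  exact ⟨le_trans (h i).1 (hx i).1, le_trans (hx i).2 (h i).2⟩

lemma euclid_apply {d : ℕ} (a b : ℝ) (x y : EuclideanSpace ℝ (Fin d)) (i : Fin d) :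
    (a • x + b • y) i = a * x i + b * y i := rfl

lemma convex_cube (d : ℕ) (R : ℝ) : Convex ℝ (cube d R) := by
  intro x hx y hy a b ha hb hab i
  rw [euclid_apply]
  calc |a * x i + b * y i| ≤ |a * x i| + |b * y i| := abs_add_le _ _
    _ = a * |x i| + b * |y i| := by rw [abs_mul, abs_mul, abs_of_nonneg ha, abs_of_nonneg hb]
    _ ≤ a * R + b * R := add_le_add (by nlinarith [hx i, abs_nonneg (x i)])
        (by nlinarith [hy i, abs_nonneg (y i)])
    _ = R := by rw [← add_mul, hab, one_mul]

lemma convex_oCell (d : ℕ) (k : Fin d → ℤ) : Convex ℝ (oCell d k) := by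
  have : oCell d k = ⋂ i, (EuclideanSpace.proj i : EuclideanSpace ℝ (Fin d) →L[ℝ] ℝ) ⁻¹'
      (Set.Ioo (k i : ℝ) ((k i : ℝ) + 1)) := by
    ext x
    simp only [oCell, Set.mem_setOf_eq, Set.mem_iInter, Set.mem_preimage, Set.mem_Ioo]
    rfl
  rw [this]
  exact convex_iInter fun i =>
    (convex_Ioo _ _).linear_preimage (EuclideanSpace.proj i : _ →L[ℝ] _).toLinearMap

lemma isClosed_latticeCube (d : ℕ) (k : Fin d → ℤ) : IsClosed (latticeCube d k) := by
  have : latticeCube d k =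
      ⋂ i, (EuclideanSpace.proj i : EuclideanSpace ℝ (Fin d) →L[ℝ] ℝ) ⁻¹'
        (Set.Icc (k i : ℝ) ((k i : ℝ) + 1)) := by
    ext x
    simp only [latticeCube, Set.mem_setOf_eq, Set.mem_iInter, Set.mem_preimage, Set.mem_Icc]
    rfl
  rw [this]
  exact isClosed_iInter fun i => IsClosed.preimage (EuclideanSpace.proj i).continuous isClosed_Icc

lemma abs_coord_le_dist {d : ℕ} (x y : EuclideanSpace ℝ (Fin d)) (i : Fin d) :
    |x i - y i| ≤ dist x y := by
  rw [EuclideanSpace.dist_eq, ← Real.sqrt_sq_eq_abs]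
  apply Real.sqrt_le_sqrt
  have h1 : dist (x i) (y i) ^ 2 ≤ ∑ j : Fin d, dist (x j) (y j) ^ 2 :=
    Finset.single_le_sum (f := fun j => dist (x j) (y j) ^ 2)
      (fun j _ => sq_nonneg _) (Finset.mem_univ i)
  rwa [Real.dist_eq, sq_abs] at h1

lemma dist_le_of_coords {d : ℕ} (x y : EuclideanSpace ℝ (Fin d)) (ε : ℝ) (hε : 0 ≤ ε)
    (h : ∀ i, |x i - y i| ≤ ε) : dist x y ≤ ε * Real.sqrt d := by
  rw [EuclideanSpace.dist_eq]
  have h1 : ∑ i : Fin d, dist (x i) (y i) ^ 2 ≤ (d : ℝ) * ε ^ 2 := by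
    calc ∑ i : Fin d, dist (x i) (y i) ^ 2 ≤ ∑ _i : Fin d, ε ^ 2 := by
          apply Finset.sum_le_sum
          intro i _
          rw [Real.dist_eq]
          exact pow_le_pow_left₀ (abs_nonneg _) (h i) 2
      _ = (d : ℝ) * ε ^ 2 := by simp [Finset.sum_const, Fintype.card_fin]
  calc Real.sqrt (∑ i : Fin d, dist (x i) (y i) ^ 2) ≤ Real.sqrt ((d:ℝ) * ε^2) :=
        Real.sqrt_le_sqrt h1
    _ = ε * Real.sqrt d := by
        rw [Real.sqrt_mul (Nat.cast_nonneg d), Real.sqrt_sq hε]; ring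

lemma exists_good {d : ℕ} {R : ℝ} (hR : 1 < R) {I : Finset (Fin d → ℤ)}
    {B : Set (EuclideanSpace ℝ (Fin d))} (hB : B = ⋃ k ∈ I, latticeCube d k)
    {A : Set (EuclideanSpace ℝ (Fin d))} (hAB : A ⊆ B)
    {C : Set (EuclideanSpace ℝ (Fin d))} {x : EuclideanSpace ℝ (Fin d)}
    (hx : x ∈ cube d R \ A) (hC : C = connectedComponentIn (cube d R \ A) x)
    (hnB : ¬ C ⊆ B) :
    ∃ k, k ∉ I ∧ (oCell d k ∩ cube d R).Nonempty ∧ oCell d k ∩ cube d R ⊆ C := by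
  set F := cube d R \ A with hF
  have hR0 : (0:ℝ) < R := by linarith
  -- B is closed
  have hBcl : IsClosed B := by
    rw [hB]
    exact Set.Finite.isClosed_biUnion I.finite_toSet fun k _ => isClosed_latticeCube d k
  obtain ⟨y, hyC, hyB⟩ := Set.not_subset.mp hnB
  have hyC' : y ∈ connectedComponentIn F x := hC ▸ hyC
  have hyF : y ∈ F := connectedComponentIn_subset F x hyC'
  have hCy : C = connectedComponentIn F y := hC.trans (connectedComponentIn_eq hyC')
  -- ball around y avoiding B
  obtain ⟨δ, hδ, hball⟩ := Metric.isOpen_iff.mp hBcl.isOpen_compl y hyB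
  -- pull y towards the origin
  set t : ℝ := min (δ / (2 * (‖y‖ + 1))) (1/2) with ht_def
  have hy_norm : (0:ℝ) < ‖y‖ + 1 := by positivity
  have ht0 : 0 < t := lt_min (by positivity) (by norm_num)
  have ht1 : t ≤ 1/2 := min_le_right _ _
  have htδ : t * ‖y‖ < δ := by
    have h1 : t ≤ δ / (2 * (‖y‖ + 1)) := min_le_left _ _
    have h2 : t * ‖y‖ ≤ δ / (2 * (‖y‖ + 1)) * ‖y‖ :=
      mul_le_mul_of_nonneg_right h1 (norm_nonneg y)
    have h3 : δ / (2 * (‖y‖ + 1)) * ‖y‖ < δ := by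
      rw [div_mul_eq_mul_div, div_lt_iff₀ (by positivity)]
      nlinarith [norm_nonneg y]
    linarith
  set y' : EuclideanSpace ℝ (Fin d) := (1 - t) • y with hy'_def
  have hy'_dist : dist y' y = t * ‖y‖ := by
    rw [dist_eq_norm]
    have h0 : y' - y = -(t • y) := by
      rw [hy'_def, sub_smul, one_smul]; abel
    rw [h0, norm_neg, norm_smul]
    simp [abs_of_pos ht0]
  have hy'_ball : y' ∈ Metric.ball y δ := by
    rw [Metric.mem_ball, hy'_dist]; exact htδ
  have hy'_coord : ∀ i, |y' i| ≤ (1 - t) * R := by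
    intro i
    have : y' i = (1 - t) * y i := rfl
    rw [this, abs_mul, abs_of_nonneg (by linarith : (0:ℝ) ≤ 1 - t)]
    exact mul_le_mul_of_nonneg_left (hyF.1 i) (by linarith)
  have hy'_cube : y' ∈ cube d R := fun i =>
    le_trans (hy'_coord i) (by nlinarith)
  -- W = ball y δ ∩ cube ⊆ C
  have hWF : Metric.ball y δ ∩ cube d R ⊆ F := by
    rintro z ⟨hz1, hz2⟩
    exact ⟨hz2, fun hzA => hball hz1 (hAB hzA)⟩
  have hWC : Metric.ball y δ ∩ cube d R ⊆ C := by
    rw [hCy]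
    exact ((convex_ball y δ).inter (convex_cube d R)).isPreconnected.subset_connectedComponentIn
      ⟨Metric.mem_ball_self hδ, hyF.1⟩ hWF
  have hy'C : y' ∈ C := hWC ⟨hy'_ball, hy'_cube⟩
  have hy'B : y' ∉ B := hball hy'_ball
  have hy'F : y' ∈ F := hWF ⟨hy'_ball, hy'_cube⟩
  have hCy' : C = connectedComponentIn F y' :=
    hCy.trans (connectedComponentIn_eq (hCy ▸ hy'C))
  -- smaller ball around y'
  set δ' : ℝ := δ - dist y' y with hδ'_def
  have hδ'0 : 0 < δ' := by
    rw [hδ'_def, hy'_dist]; linarith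
  have hball' : Metric.ball y' δ' ⊆ Metric.ball y δ := by
    intro z hz
    rw [Metric.mem_ball] at hz ⊢
    calc dist z y ≤ dist z y' + dist y' y := dist_triangle _ _ _
      _ < δ' + dist y' y := by linarith
      _ = δ := by rw [hδ'_def]; ring
  -- epsilon
  set ε : ℝ := min (min (1/2) (t * R)) (δ' / (Real.sqrt d + 1)) with hε_def
  have hsd : (0:ℝ) ≤ Real.sqrt d := Real.sqrt_nonneg d
  have hε0 : 0 < ε := by
    apply lt_min (lt_min (by norm_num) (by positivity))
    positivity
  have hε12 : ε ≤ 1/2 := le_trans (min_le_left _ _) (min_le_left _ _)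
  have hεtR : ε ≤ t * R := le_trans (min_le_left _ _) (min_le_right _ _)
  have hεδ' : ε * Real.sqrt d < δ' := by
    have h1 : ε ≤ δ' / (Real.sqrt d + 1) := min_le_right _ _
    have h2 : ε * Real.sqrt d ≤ δ' / (Real.sqrt d + 1) * Real.sqrt d :=
      mul_le_mul_of_nonneg_right h1 hsd
    have h3 : δ' / (Real.sqrt d + 1) * Real.sqrt d < δ' := by
      rw [div_mul_eq_mul_div, div_lt_iff₀ (by positivity)]
      nlinarith
    linarith
  -- the lattice cell containing y'
  set k : Fin d → ℤ := fun i => ⌊y' i⌋ with hk_def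
  have hy'k : y' ∈ latticeCube d k := by
    intro i
    exact ⟨Int.floor_le _, (Int.lt_floor_add_one _).le⟩
  have hkI : k ∉ I := by
    intro hkmem
    exact hy'B (hB ▸ Set.mem_biUnion hkmem hy'k)
  -- the witness point w
  set w : EuclideanSpace ℝ (Fin d) :=
    WithLp.toLp 2 (fun i => (k i : ℝ) + min (max (y' i - k i) ε) (1 - ε) : Fin d → ℝ) with hw_def
  have hw_apply : ∀ i, w i = (k i : ℝ) + min (max (y' i - k i) ε) (1 - ε) := fun i => rfl
  have hwoCell : w ∈ oCell d k := by
    intro i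
    rw [hw_apply i]
    constructor
    · have : ε ≤ min (max (y' i - k i) ε) (1 - ε) :=
        le_min (le_max_right _ _) (by linarith)
      linarith
    · have : min (max (y' i - k i) ε) (1 - ε) ≤ 1 - ε := min_le_right _ _
      linarith
  have hw_close : ∀ i, |w i - y' i| ≤ ε := by
    intro i
    rw [hw_apply i]
    have hfl : (0:ℝ) ≤ y' i - k i := by
      have := Int.floor_le (y' i)
      simp only [hk_def]
      linarith
    have hfu : y' i - (k i : ℝ) ≤ 1 := by
      have := Int.lt_floor_add_one (y' i)
      simp only [hk_def]
      linarith
    rw [abs_le]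
    rcases le_total (y' i - (k i : ℝ)) ε with h | h
    · rw [max_eq_right h, min_eq_left (by linarith)]
      constructor <;> linarith
    · rw [max_eq_left h]
      rcases le_total (y' i - (k i : ℝ)) (1 - ε) with h' | h'
      · rw [min_eq_left h']
        constructor <;> linarith
      · rw [min_eq_right h']
        constructor <;> linarith
  have hw_ball : w ∈ Metric.ball y' δ' := by
    rw [Metric.mem_ball]
    calc dist w y' ≤ ε * Real.sqrt d := dist_le_of_coords _ _ ε hε0.le hw_close
      _ < δ' := hεδ'
  have hw_cube : w ∈ cube d R := by
    intro i
    calc |w i| ≤ |y' i| + |w i - y' i| := by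
          have := abs_add_le (y' i) (w i - y' i); simpa using this
      _ ≤ (1 - t) * R + ε := add_le_add (hy'_coord i) (hw_close i)
      _ ≤ (1 - t) * R + t * R := by linarith
      _ = R := by ring
  -- conclude
  set V : Set (EuclideanSpace ℝ (Fin d)) := oCell d k ∩ cube d R with hV_def
  set W' : Set (EuclideanSpace ℝ (Fin d)) := Metric.ball y' δ' ∩ cube d R with hW'_def
  have hVF : V ⊆ F := by
    rintro z ⟨hz1, hz2⟩
    exact ⟨hz2, fun hzA => notMem_B_of_oCell hkI hz1 (hB ▸ hAB hzA)⟩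
  have hW'F : W' ⊆ F := fun z hz => hWF ⟨hball' hz.1, hz.2⟩
  have hUconn : IsPreconnected (V ∪ W') :=
    IsPreconnected.union w ⟨hwoCell, hw_cube⟩ ⟨hw_ball, hw_cube⟩
      ((convex_oCell d k).inter (convex_cube d R)).isPreconnected
      ((convex_ball y' δ').inter (convex_cube d R)).isPreconnected
  have hy'U : y' ∈ V ∪ W' := Or.inr ⟨Metric.mem_ball_self hδ'0, hy'_cube⟩
  have hUC : V ∪ W' ⊆ C := by
    rw [hCy']
    exact hUconn.subset_connectedComponentIn hy'U (Set.union_subset hVF hW'F)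
  exact ⟨k, hkI, ⟨w, hwoCell, hw_cube⟩, fun z hz => hUC (Or.inl hz)⟩

lemma step_good {d : ℕ} {R : ℝ} {I : Finset (Fin d → ℤ)}
    {B : Set (EuclideanSpace ℝ (Fin d))} (hB : B = ⋃ k ∈ I, latticeCube d k)
    {A : Set (EuclideanSpace ℝ (Fin d))} (hAB : A ⊆ B)
    {C : Set (EuclideanSpace ℝ (Fin d))} {x : EuclideanSpace ℝ (Fin d)}
    (hx : x ∈ cube d R \ A) (hC : C = connectedComponentIn (cube d R \ A) x)
    {i0 : Fin d} {k : Fin d → ℤ} (hkI : k ∉ I)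
    (hne : (oCell d k ∩ cube d R).Nonempty) (hsub : oCell d k ∩ cube d R ⊆ C)
    (hcube : latticeCube d (Function.update k i0 (k i0 + 1)) ⊆ cube d R)
    (hk'I : Function.update k i0 (k i0 + 1) ∉ I) :
    (oCell d (Function.update k i0 (k i0 + 1)) ∩ cube d R).Nonempty ∧
      oCell d (Function.update k i0 (k i0 + 1)) ∩ cube d R ⊆ C := by
  set F := cube d R \ A with hF
  set k' := Function.update k i0 (k i0 + 1) with hk'
  -- the double box
  set D := dBox d i0 k ∩ cube d R with hD
  have hDF : D ⊆ F := by
    rintro z ⟨hz1, hz2⟩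
    exact ⟨hz2, fun hzA => notMem_B_of_dBox hkI hk'I hz1 (hB ▸ hAB hzA)⟩
  obtain ⟨z, hz⟩ := hne
  have hzC : z ∈ C := hsub hz
  have hCz : C = connectedComponentIn F z := hC.trans (connectedComponentIn_eq (hC ▸ hzC))
  have hzD : z ∈ D := ⟨oCell_subset_dBox d i0 k hz.1, hz.2⟩
  have hDC : D ⊆ C := by
    rw [hCz]
    exact ((convex_dBox d i0 k).inter (convex_cube d R)).isPreconnected.subset_connectedComponentIn
      hzD hDF
  have hsub' : oCell d k' ∩ cube d R ⊆ C := fun u hu =>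
    hDC ⟨oCell_shift_subset_dBox d i0 k hu.1, hu.2⟩
  -- center of the shifted cell
  set c : EuclideanSpace ℝ (Fin d) := WithLp.toLp 2 (fun i => (k' i : ℝ) + 1/2 : Fin d → ℝ) with hc
  have hcoCell : c ∈ oCell d k' := by
    intro i
    constructor
    · show (k' i : ℝ) < (k' i : ℝ) + 1/2; linarith
    · show (k' i : ℝ) + 1/2 < (k' i : ℝ) + 1; linarith
  have hclat : c ∈ latticeCube d k' := by
    intro i
    constructor
    · show (k' i : ℝ) ≤ (k' i : ℝ) + 1/2; linarith
    · show (k' i : ℝ) + 1/2 ≤ (k' i : ℝ) + 1; linarith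
  exact ⟨⟨c, hcoCell, hcube hclat⟩, hsub'⟩

def shft {d : ℕ} (i0 : Fin d) (k : Fin d → ℤ) : Fin d → ℤ := Function.update k i0 (k i0 + 1)

lemma shft_same {d : ℕ} (i0 : Fin d) (k : Fin d → ℤ) : shft i0 k i0 = k i0 + 1 :=
  Function.update_self _ _ _

lemma shft_ne {d : ℕ} (i0 : Fin d) (k : Fin d → ℤ) {i : Fin d} (hi : i ≠ i0) :
    shft i0 k i = k i := Function.update_of_ne hi _ _

lemma shft_inj {d : ℕ} (i0 : Fin d) : Function.Injective (shft (d := d) i0) := by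
  intro a b hab
  have h0 : a i0 + 1 = b i0 + 1 := by
    have := congrFun hab i0
    rwa [shft_same, shft_same] at this
  funext i
  by_cases hi : i = i0
  · subst hi; omega
  · have := congrFun hab i
    rwa [shft_ne _ _ hi, shft_ne _ _ hi] at this


lemma filter_pi_card_le (d : ℕ) (bd Ic : Finset ℤ) (p : (Fin d → ℤ) → Prop) [DecidablePred p]
    (hp : ∀ k, p k → ∃ i, k i ∈ bd) :
    ((Fintype.piFinset fun _ : Fin d => Ic).filter p).card ≤ d * (bd.card * Ic.card ^ (d - 1)) := by
  classical
  have hsub : (Fintype.piFinset fun _ : Fin d => Ic).filter p ⊆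
      Finset.univ.biUnion (fun i : Fin d =>
        Fintype.piFinset (fun j => if j = i then bd else Ic)) := by
    intro k hk
    rw [Finset.mem_filter] at hk
    obtain ⟨i, hi⟩ := hp k hk.2
    rw [Finset.mem_biUnion]
    refine ⟨i, Finset.mem_univ i, ?_⟩
    rw [Fintype.mem_piFinset]
    intro j
    by_cases hj : j = i
    · subst hj; rw [if_pos rfl]; exact hi
    · rw [if_neg hj]; exact Fintype.mem_piFinset.mp hk.1 j
  have hpi : ∀ i : Fin d, (Fintype.piFinset (fun j => if j = i then bd else Ic)).card
      = bd.card * Ic.card ^ (d - 1) := by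
    intro i
    rw [Fintype.card_piFinset]
    rw [← Finset.mul_prod_erase Finset.univ _ (Finset.mem_univ i)]
    rw [if_pos rfl]
    congr 1
    rw [Finset.prod_congr rfl (fun j hj => by rw [if_neg (Finset.ne_of_mem_erase hj)])]
    rw [Finset.prod_const, Finset.card_erase_of_mem (Finset.mem_univ i), Finset.card_univ,
      Fintype.card_fin]
  calc ((Fintype.piFinset fun _ : Fin d => Ic).filter p).card
      ≤ (Finset.univ.biUnion (fun i : Fin d =>
          Fintype.piFinset (fun j => if j = i then bd else Ic))).card :=
        Finset.card_le_card hsub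
    _ ≤ ∑ i : Fin d, (Fintype.piFinset (fun j => if j = i then bd else Ic)).card :=
        Finset.card_biUnion_le
    _ = ∑ _i : Fin d, bd.card * Ic.card ^ (d - 1) := Finset.sum_congr rfl (fun i _ => hpi i)
    _ = d * (bd.card * Ic.card ^ (d - 1)) := by
        rw [Finset.sum_const, Finset.card_univ, Fintype.card_fin, smul_eq_mul]

lemma bd_card_le (R : ℝ) : (insert (-⌈R⌉) (Finset.Icc (⌈R⌉ - 2) ⌈R⌉)).card ≤ 4 := by
  refine le_trans (Finset.card_insert_le _ _) ?_
  rw [Int.card_Icc]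
  have h3 : ⌈R⌉ + 1 - (⌈R⌉ - 2) = (3 : ℤ) := by ring
  rw [h3]
  decide

lemma Ic_card_le (R : ℝ) (hR : 1 < R) : (((Finset.Icc (-⌈R⌉) ⌈R⌉).card : ℕ) : ℝ) ≤ 5 * R := by
  have hR0 : (0:ℝ) < R := by linarith
  have hceil_pos : (1:ℤ) ≤ ⌈R⌉ := by
    have : (0:ℤ) < ⌈R⌉ := Int.ceil_pos.mpr hR0
    omega
  have h4 : (0:ℤ) ≤ ⌈R⌉ + 1 - (-⌈R⌉) := by omega
  have hcard : (((Finset.Icc (-⌈R⌉) ⌈R⌉).card : ℕ) : ℤ) = 2 * ⌈R⌉ + 1 := by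
    rw [Int.card_Icc, Int.toNat_of_nonneg h4]; ring
  have hcardR : (((Finset.Icc (-⌈R⌉) ⌈R⌉).card : ℕ) : ℝ) = 2 * (⌈R⌉ : ℝ) + 1 := by
    exact_mod_cast hcard
  have hceil1 : (⌈R⌉ : ℝ) < R + 1 := Int.ceil_lt_add_one R
  rw [hcardR]
  linarith

lemma count_final {n a b m4 mIc d : ℕ} {R : ℝ} (hR : 1 < R)
    (h1 : n ≤ a + b) (h2 : b ≤ d * (m4 * mIc ^ (d - 1))) (h3 : m4 ≤ 4)
    (h4 : (mIc : ℝ) ≤ 5 * R) :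
    (n : ℝ) ≤ a + (d : ℝ) * 4 * 5 ^ (d - 1) * R ^ (d - 1) := by
  have hR0 : (0:ℝ) < R := by linarith
  have c1 : (n : ℝ) ≤ (a : ℝ) + (b : ℝ) := by exact_mod_cast h1
  have c2 : (b : ℝ) ≤ (d : ℝ) * ((m4 : ℝ) * (mIc : ℝ) ^ (d - 1)) := by exact_mod_cast h2
  have c3 : (m4 : ℝ) ≤ 4 := by exact_mod_cast h3
  have c5 : (mIc : ℝ) ^ (d - 1) ≤ (5 * R) ^ (d - 1) :=
    pow_le_pow_left₀ (Nat.cast_nonneg mIc) h4 (d - 1)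
  have c6 : (m4 : ℝ) * (mIc : ℝ) ^ (d - 1) ≤ 4 * (5 * R) ^ (d - 1) :=
    mul_le_mul c3 c5 (pow_nonneg (Nat.cast_nonneg mIc) _) (by norm_num)
  have c7 : (d : ℝ) * ((m4 : ℝ) * (mIc : ℝ) ^ (d - 1)) ≤ (d : ℝ) * (4 * (5 * R) ^ (d - 1)) :=
    mul_le_mul_of_nonneg_left c6 (Nat.cast_nonneg d)
  have c8 : (d : ℝ) * (4 * (5 * R) ^ (d - 1)) = (d : ℝ) * 4 * 5 ^ (d - 1) * R ^ (d - 1) := by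
    rw [mul_pow]; ring
  linarith

set_option maxHeartbeats 2000000 in
/-- If `B ⊆ [-R,R]^d` is a finite union of unit lattice cubes and `A ⊆ B` is closed,
the number of connected components of `[-R,R]^d \ A` not contained in `B` is at most
`Vol(B) + c·R^{d-1}` for a constant `c` depending only on `d`. -/
theorem components_not_in_B_bound (d : ℕ) (hd : 1 ≤ d) :
    ∃ c > 0, ∀ R : ℝ, 1 < R → ∀ I : Finset (Fin d → ℤ),
      ∀ B : Set (EuclideanSpace ℝ (Fin d)), B = ⋃ k ∈ I, latticeCube d k →
      B ⊆ cube d R →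
      ∀ A : Set (EuclideanSpace ℝ (Fin d)), IsClosed A → A ⊆ B →
      (Set.ncard {C : Set (EuclideanSpace ℝ (Fin d)) |
          (∃ x ∈ cube d R \ A, C = connectedComponentIn (cube d R \ A) x) ∧ ¬ C ⊆ B} : ℝ)
        ≤ I.card + c * R ^ (d - 1) := by
  classical
  have hd0 : 0 < d := hd
  set i0 : Fin d := ⟨0, hd0⟩ with hi0
  refine ⟨(d : ℝ) * 4 * 5 ^ (d - 1), ?_, ?_⟩
  · have h1 : (1:ℝ) ≤ d := by exact_mod_cast hd
    have h2 : (0:ℝ) < 5 ^ (d - 1) := by positivity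
    nlinarith
  intro R hR I B hB hBR A hAcl hAB
  have hR0 : (0:ℝ) < R := by linarith
  set S := {C : Set (EuclideanSpace ℝ (Fin d)) |
      (∃ x ∈ cube d R \ A, C = connectedComponentIn (cube d R \ A) x) ∧ ¬ C ⊆ B} with hS
  -- existence of good cells
  have hgoodex : ∀ C ∈ S, ∃ k, k ∉ I ∧ (oCell d k ∩ cube d R).Nonempty ∧
      oCell d k ∩ cube d R ⊆ C := by
    rintro C ⟨⟨x, hx, hCx⟩, hnB⟩
    exact exists_good hR hB hAB hx hCx hnB
  have hccS : ∀ C ∈ S, ∀ z ∈ C, C = connectedComponentIn (cube d R \ A) z := by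
    rintro C ⟨⟨x, hx, rfl⟩, -⟩ z hz
    exact connectedComponentIn_eq hz
  have hgoodeq : ∀ C ∈ S, ∀ C' ∈ S, ∀ k : Fin d → ℤ,
      ((oCell d k ∩ cube d R).Nonempty ∧ oCell d k ∩ cube d R ⊆ C) →
      ((oCell d k ∩ cube d R).Nonempty ∧ oCell d k ∩ cube d R ⊆ C') → C = C' := by
    rintro C hC C' hC' k ⟨⟨z, hz⟩, hsub⟩ ⟨-, hsub'⟩
    rw [hccS C hC z (hsub hz), hccS C' hC' z (hsub' hz)]
  -- coordinate bounds for good cells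
  have hkbd : ∀ k : Fin d → ℤ, (oCell d k ∩ cube d R).Nonempty →
      ∀ i, -⌈R⌉ ≤ k i ∧ k i ≤ ⌈R⌉ := by
    rintro k ⟨z, hz1, hz2⟩ i
    have h1 : (k i : ℝ) < z i := (hz1 i).1
    have h2 : z i < (k i : ℝ) + 1 := (hz1 i).2
    have h3 : |z i| ≤ R := hz2 i
    have hc : (R:ℝ) ≤ ⌈R⌉ := Int.le_ceil R
    rw [abs_le] at h3
    constructor
    · have ha : ((-⌈R⌉ : ℤ) : ℝ) < (k i : ℝ) + 1 := by push_cast; linarith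
      have hb : -⌈R⌉ < k i + 1 := by exact_mod_cast ha
      omega
    · have ha : (k i : ℝ) < ((⌈R⌉ : ℤ) : ℝ) + 1 := by push_cast; linarith
      have hb : k i < ⌈R⌉ + 1 := by exact_mod_cast ha
      omega
  -- choose a good cell with maximal i0-coordinate
  have hmax : ∀ C, ∃ k : Fin d → ℤ, C ∈ S →
      (k ∉ I ∧ (oCell d k ∩ cube d R).Nonempty ∧ oCell d k ∩ cube d R ⊆ C) ∧
      ∀ k' : Fin d → ℤ,
        (k' ∉ I ∧ (oCell d k' ∩ cube d R).Nonempty ∧ oCell d k' ∩ cube d R ⊆ C) →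
        k' i0 ≤ k i0 := by
    intro C
    by_cases hC : C ∈ S
    · obtain ⟨ub, ⟨k, hk, hki⟩, hub⟩ := Int.exists_greatest_of_bdd
        (P := fun n => ∃ k : Fin d → ℤ,
          (k ∉ I ∧ (oCell d k ∩ cube d R).Nonempty ∧ oCell d k ∩ cube d R ⊆ C) ∧ k i0 = n)
        ⟨⌈R⌉, by rintro z ⟨k, hk, rfl⟩; exact (hkbd k hk.2.1 i0).2⟩
        ⟨(hgoodex C hC).choose i0, (hgoodex C hC).choose, (hgoodex C hC).choose_spec, rfl⟩
      exact ⟨k, fun _ => ⟨hk, fun k' h' => by rw [hki]; exact hub _ ⟨k', h', rfl⟩⟩⟩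
    · exact ⟨fun _ => 0, fun h => absurd h hC⟩
  choose kf hkf using hmax
  -- if the shifted cube fits inside the big cube, it must belong to I
  have hforced : ∀ C, C ∈ S →
      latticeCube d (shft i0 (kf C)) ⊆ cube d R → shft i0 (kf C) ∈ I := by
    intro C hC hfit
    by_contra hnot
    obtain ⟨⟨x, hx, hCx⟩, hnB⟩ := hC
    have hCS : C ∈ S := ⟨⟨x, hx, hCx⟩, hnB⟩
    have hg := (hkf C hCS).1
    have hstep := step_good hB hAB hx hCx hg.1 hg.2.1 hg.2.2 hfit hnot
    have hle := (hkf C hCS).2 _ ⟨hnot, hstep.1, hstep.2⟩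
    rw [shft_same] at hle
    omega
  -- the injection into I ⊕ Bd
  set f : Set (EuclideanSpace ℝ (Fin d)) → (Fin d → ℤ) ⊕ (Fin d → ℤ) := fun C =>
    if latticeCube d (shft i0 (kf C)) ⊆ cube d R then Sum.inl (shft i0 (kf C))
    else Sum.inr (kf C) with hf
  set Ic : Finset ℤ := Finset.Icc (-⌈R⌉) ⌈R⌉ with hIc
  set bd : Finset ℤ := insert (-⌈R⌉) (Finset.Icc (⌈R⌉ - 2) ⌈R⌉) with hbd
  set Bd : Finset (Fin d → ℤ) :=
    (Fintype.piFinset fun _ => Ic).filter (fun k => ∃ i, k i ∈ bd) with hBd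
  set T : Finset ((Fin d → ℤ) ⊕ (Fin d → ℤ)) := I.image Sum.inl ∪ Bd.image Sum.inr with hT
  have hmemBd : ∀ C ∈ S, ¬(latticeCube d (shft i0 (kf C)) ⊆ cube d R) → kf C ∈ Bd := by
    intro C hC hnfit
    have hg := (hkf C hC).1
    have hbox := hkbd _ hg.2.1
    have hex : ∃ i, ¬((-R : ℝ) ≤ shft i0 (kf C) i ∧ (shft i0 (kf C) i : ℝ) + 1 ≤ R) := by
      by_contra hall
      push_neg at hall
      apply hnfit
      apply latticeCube_subset_cube
      intro i
      constructor
      · exact (hall i).1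
      · by_contra hcon
        push_neg at hcon
        exact absurd ((hall i).2) (not_le.mpr hcon)
    obtain ⟨i, hi⟩ := hex
    rw [not_and_or] at hi
    rw [hBd, Finset.mem_filter]
    have hkil : -⌈R⌉ ≤ kf C i := (hbox i).1
    have hkiu : kf C i ≤ ⌈R⌉ := (hbox i).2
    have hceil1 : (⌈R⌉ : ℝ) < R + 1 := Int.ceil_lt_add_one R
    have hceil2 : (R : ℝ) ≤ ⌈R⌉ := Int.le_ceil R
    constructor
    · rw [Fintype.mem_piFinset]
      intro j
      rw [hIc, Finset.mem_Icc]
      exact ⟨(hbox j).1, (hbox j).2⟩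
    · refine ⟨i, ?_⟩
      rcases hi with hi | hi
      · push_neg at hi
        by_cases hii : i = i0
        · exfalso
          rw [hii, shft_same] at hi
          push_cast at hi
          have hkil0 : -⌈R⌉ ≤ kf C i0 := (hbox i0).1
          have hcast : -(⌈R⌉ : ℝ) ≤ (kf C i0 : ℝ) := by exact_mod_cast hkil0
          linarith
        · rw [shft_ne _ _ hii] at hi
          have h1 : (kf C i : ℝ) < (-⌈R⌉ : ℤ) + 1 := by push_cast; linarith
          have h2 : kf C i < -⌈R⌉ + 1 := by exact_mod_cast h1
          have h3 : kf C i = -⌈R⌉ := by omega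
          rw [hbd, Finset.mem_insert]
          exact Or.inl h3
      · push_neg at hi
        have hle : shft i0 (kf C) i ≤ kf C i + 1 := by
          by_cases hii : i = i0
          · subst hii; rw [shft_same]
          · rw [shft_ne _ _ hii]; omega
        have hcast : ((shft i0 (kf C)) i : ℝ) ≤ (kf C i : ℝ) + 1 := by exact_mod_cast hle
        have h1 : (⌈R⌉ : ℝ) - 3 < (kf C i : ℝ) := by linarith
        have h2 : ((⌈R⌉ - 3 : ℤ) : ℝ) < (kf C i : ℝ) := by push_cast; linarith
        have h3 : ⌈R⌉ - 3 < kf C i := by exact_mod_cast h2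
        rw [hbd, Finset.mem_insert]
        right
        rw [Finset.mem_Icc]
        omega
  have hfT : ∀ C ∈ S, f C ∈ T := by
    intro C hC
    simp only [hf]
    by_cases hfit : latticeCube d (shft i0 (kf C)) ⊆ cube d R
    · rw [if_pos hfit, hT]
      exact Finset.mem_union_left _ (Finset.mem_image_of_mem _ (hforced C hC hfit))
    · rw [if_neg hfit, hT]
      exact Finset.mem_union_right _ (Finset.mem_image_of_mem _ (hmemBd C hC hfit))
  have hinj : Set.InjOn f S := by
    intro C hC C' hC' hff
    simp only [hf] at hff
    by_cases h1 : latticeCube d (shft i0 (kf C)) ⊆ cube d R <;>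
      by_cases h2 : latticeCube d (shft i0 (kf C')) ⊆ cube d R
    · rw [if_pos h1, if_pos h2] at hff
      have hk : kf C = kf C' := shft_inj i0 (Sum.inl.inj hff)
      refine hgoodeq C hC C' hC' (kf C)
        ⟨(hkf C hC).1.2.1, (hkf C hC).1.2.2⟩ ?_
      rw [hk]
      exact ⟨(hkf C' hC').1.2.1, (hkf C' hC').1.2.2⟩
    · rw [if_pos h1, if_neg h2] at hff; exact absurd hff (by simp)
    · rw [if_neg h1, if_pos h2] at hff; exact absurd hff (by simp)
    · rw [if_neg h1, if_neg h2] at hff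
      have hk : kf C = kf C' := Sum.inr.inj hff
      refine hgoodeq C hC C' hC' (kf C)
        ⟨(hkf C hC).1.2.1, (hkf C hC).1.2.2⟩ ?_
      rw [hk]
      exact ⟨(hkf C' hC').1.2.1, (hkf C' hC').1.2.2⟩
  -- counting
  have himg : f '' S ⊆ ↑T := by rintro - ⟨C, hC, rfl⟩; exact hfT C hC
  have hST : S.ncard ≤ I.card + Bd.card := by
    have h1 : S.ncard = (f '' S).ncard := (Set.ncard_image_of_injOn hinj).symm
    have h2 : (f '' S).ncard ≤ T.card := by
      have h := Set.ncard_le_ncard himg T.finite_toSet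
      rwa [Set.ncard_coe_finset] at h
    calc S.ncard ≤ T.card := h1 ▸ h2
      _ ≤ (I.image Sum.inl).card + (Bd.image Sum.inr).card := Finset.card_union_le _ _
      _ ≤ I.card + Bd.card := add_le_add Finset.card_image_le Finset.card_image_le
  -- bounding Bd and conclusion
  have hBdcard : Bd.card ≤ d * (bd.card * Ic.card ^ (d - 1)) := by
    rw [hBd]
    exact filter_pi_card_le d bd Ic _ (fun k hk => hk)
  have hbd4 : bd.card ≤ 4 := hbd ▸ bd_card_le R
  have hIc5R : (Ic.card : ℝ) ≤ 5 * R := by rw [hIc]; exact Ic_card_le R hR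
  exact count_final hR hST hBdcard hbd4 hIc5R
end

section
/- Let (X_R)_{R>0} be nonnegative integer-valued random variables and v(R) → ∞ a deterministic function, with c > 0 a constant. Assume: (i) X_R/v(R) → c in probability; (ii) the lower concentration property: for every ε > 0, P(X_R/v(R) < c − ε) = o(1/v(R)); and (iii) v(R) = O(R^d) for the normalization. Then E[ (v(R)/X_R)·1_{X_R > 0} ] → 1/c as R → ∞, and in fact the convergence holds in mean: E| (v(R)/X_R)·1_{X_R>0} − 1/c | → 0. -/
open MeasureTheory Filter Topology

/-- If nonnegative integer-valued random variables `X_R` satisfy `X_R / v(R) → c > 0`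
in probability, the lower concentration property
`P(X_R / v(R) < c - ε) = o(1/v(R))`, and `v(R) = O(R^d)`, then
`E[(v(R)/X_R)·1_{X_R>0}] → 1/c`, and indeed the convergence holds in mean. -/
theorem empirical_mean_convergence (d : ℕ)
    (Ω : ℝ → Type*) [∀ R, MeasureSpace (Ω R)]
    [∀ R, IsProbabilityMeasure (volume : Measure (Ω R))]
    (X : ∀ R : ℝ, Ω R → ℕ) (hmeas : ∀ R, Measurable (X R))
    (v : ℝ → ℝ) (c Cgr : ℝ) (hc : 0 < c) (hCgr : 0 < Cgr)
    (hv_pos : ∀ R, 0 < v R) (hv_top : Tendsto v atTop atTop)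
    (hv_growth : ∀ R > 0, v R ≤ Cgr * R ^ d)
    (hprob : ∀ ε > 0,
      Tendsto (fun R => (volume {ω : Ω R | ε < |(X R ω : ℝ) / v R - c|}).toReal)
        atTop (𝓝 0))
    (hlower : ∀ ε > 0,
      Tendsto (fun R => v R * (volume {ω : Ω R | (X R ω : ℝ) / v R < c - ε}).toReal)
        atTop (𝓝 0)) :
    Tendsto (fun R => ∫ ω, (if 0 < X R ω then v R / (X R ω : ℝ) else 0))
      atTop (𝓝 (1 / c)) ∧
    Tendsto (fun R => ∫ ω, |(if 0 < X R ω then v R / (X R ω : ℝ) else 0) - 1 / c|)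
      atTop (𝓝 0) := by
  -- measurability of Y R
  have hYmeas : ∀ R, Measurable
      (fun ω : Ω R => (if 0 < X R ω then v R / (X R ω : ℝ) else 0)) := by
    intro R
    have hset : MeasurableSet {ω : Ω R | 0 < X R ω} := (hmeas R) measurableSet_Ioi
    have hx : Measurable (fun ω : Ω R => (X R ω : ℝ)) :=
      measurable_from_top.comp (hmeas R)
    exact Measurable.ite hset (measurable_const.div hx) measurable_const
  -- pointwise bounds on Y
  have hYnonneg : ∀ R (ω : Ω R),
      0 ≤ (if 0 < X R ω then v R / (X R ω : ℝ) else 0) := by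
    intro R ω
    split
    · have := (hv_pos R).le
      positivity
    · exact le_refl 0
  have hYle : ∀ R (ω : Ω R),
      (if 0 < X R ω then v R / (X R ω : ℝ) else 0) ≤ v R := by
    intro R ω
    split_ifs with h
    · have h1 : (1 : ℝ) ≤ (X R ω : ℝ) := by exact_mod_cast h
      calc v R / (X R ω : ℝ) ≤ v R / 1 :=
            div_le_div_of_nonneg_left (hv_pos R).le one_pos h1
        _ = v R := div_one _
    · exact (hv_pos R).le
  -- integrability of Y R
  have hYint : ∀ R, Integrable
      (fun ω : Ω R => (if 0 < X R ω then v R / (X R ω : ℝ) else 0)) volume := by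
    intro R
    refine (integrable_const (v R)).mono' (hYmeas R).aestronglyMeasurable ?_
    filter_upwards with ω
    rw [Real.norm_eq_abs, abs_of_nonneg (hYnonneg R ω)]
    exact hYle R ω
  have hZint : ∀ R, Integrable
      (fun ω : Ω R => |(if 0 < X R ω then v R / (X R ω : ℝ) else 0) - 1 / c|)
      volume := fun R => ((hYint R).sub (integrable_const _)).abs
  -- measurable bad sets
  have hS1 : ∀ R (ε : ℝ), MeasurableSet {ω : Ω R | ε < |(X R ω : ℝ) / v R - c|} := by
    intro R ε
    have hx : Measurable (fun ω : Ω R => |(X R ω : ℝ) / v R - c|) :=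
      ((measurable_from_top.comp (hmeas R)).div_const _).sub_const c |>.abs
    exact hx measurableSet_Ioi
  have hS2 : ∀ R (ε : ℝ), MeasurableSet {ω : Ω R | (X R ω : ℝ) / v R < c - ε} := by
    intro R ε
    have hx : Measurable (fun ω : Ω R => (X R ω : ℝ) / v R) :=
      (measurable_from_top.comp (hmeas R)).div_const _
    exact hx measurableSet_Iio
  -- key integral estimate for fixed ε ∈ (0, c)
  have key : ∀ ε, 0 < ε → ε < c → ∀ R,
      (∫ ω, |(if 0 < X R ω then v R / (X R ω : ℝ) else 0) - 1 / c|)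
      ≤ ε / (c * (c - ε))
        + ((1 / (c - ε) + 1 / c)
            * (volume {ω : Ω R | ε < |(X R ω : ℝ) / v R - c|}).toReal
          + (v R + 1 / c)
            * (volume {ω : Ω R | (X R ω : ℝ) / v R < c - ε}).toReal) := by
    intro ε hε hεc R
    have hcε : 0 < c - ε := by linarith
    have hM : (0:ℝ) ≤ 1 / (c - ε) + 1 / c := by positivity
    have hV : (0:ℝ) ≤ v R + 1 / c := by
      have := (hv_pos R).le; positivity
    have hδ : (0:ℝ) ≤ ε / (c * (c - ε)) := by positivity
    -- the dominating function
    set g : Ω R → ℝ := fun ω =>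
      ε / (c * (c - ε))
      + ((Set.indicator {ω : Ω R | ε < |(X R ω : ℝ) / v R - c|}
            (fun _ => 1 / (c - ε) + 1 / c) ω)
        + (Set.indicator {ω : Ω R | (X R ω : ℝ) / v R < c - ε}
            (fun _ => v R + 1 / c) ω)) with hg
    have hgint : Integrable g volume := by
      refine (integrable_const _).add (Integrable.add ?_ ?_)
      · exact (integrable_const _).indicator (hS1 R ε)
      · exact (integrable_const _).indicator (hS2 R ε)
    have hptwise : ∀ ω : Ω R,
        |(if 0 < X R ω then v R / (X R ω : ℝ) else 0) - 1 / c| ≤ g ω := by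
      intro ω
      have hind1 : 0 ≤ Set.indicator {ω : Ω R | ε < |(X R ω : ℝ) / v R - c|}
          (fun _ => 1 / (c - ε) + 1 / c) ω := Set.indicator_nonneg (fun _ _ => hM) ω
      have hind2 : 0 ≤ Set.indicator {ω : Ω R | (X R ω : ℝ) / v R < c - ε}
          (fun _ => v R + 1 / c) ω := Set.indicator_nonneg (fun _ _ => hV) ω
      by_cases h2 : (X R ω : ℝ) / v R < c - ε
      · -- bad low event
        have hmem : ω ∈ {ω : Ω R | (X R ω : ℝ) / v R < c - ε} := h2
        rw [hg]
        simp only [Set.indicator_of_mem hmem]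
        have hb : |(if 0 < X R ω then v R / (X R ω : ℝ) else 0) - 1 / c|
            ≤ v R + 1 / c := by
          rw [abs_sub_le_iff]
          constructor
          · have := hYle R ω
            have h1c : (0:ℝ) ≤ 1 / c := by positivity
            linarith
          · have := hYnonneg R ω
            have hvr := (hv_pos R).le
            linarith
        linarith
      · -- X ≥ (c-ε) v, so X > 0 and Y = v/X ≤ 1/(c-ε)
        push_neg at h2
        have hvR := hv_pos R
        have hxl : (c - ε) * v R ≤ (X R ω : ℝ) := (le_div_iff₀ hvR).mp h2
        have hxpos : (0:ℝ) < (X R ω : ℝ) := lt_of_lt_of_le (by positivity) hxl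
        have hXpos : 0 < X R ω := by exact_mod_cast hxpos
        have hYval : (if 0 < X R ω then v R / (X R ω : ℝ) else 0)
            = v R / (X R ω : ℝ) := if_pos hXpos
        have hYub : v R / (X R ω : ℝ) ≤ 1 / (c - ε) := by
          rw [div_le_div_iff₀ hxpos hcε]
          nlinarith
        by_cases h1 : ε < |(X R ω : ℝ) / v R - c|
        · have hmem : ω ∈ {ω : Ω R | ε < |(X R ω : ℝ) / v R - c|} := h1
          rw [hg]
          simp only [Set.indicator_of_mem hmem]
          have hb : |(if 0 < X R ω then v R / (X R ω : ℝ) else 0) - 1 / c|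
              ≤ 1 / (c - ε) + 1 / c := by
            rw [hYval, abs_sub_le_iff]
            have hYpos : (0:ℝ) ≤ v R / (X R ω : ℝ) := by positivity
            have h1c : (0:ℝ) ≤ 1 / c := by positivity
            have h1cε : (0:ℝ) ≤ 1 / (c - ε) := by positivity
            constructor <;> linarith
          linarith
        · -- good event: |X/v - c| ≤ ε
          push_neg at h1
          rw [abs_le] at h1
          have hxu : (X R ω : ℝ) ≤ (c + ε) * v R := by
            have h12 : (X R ω : ℝ) / v R ≤ c + ε := by linarith [h1.2]
            exact (div_le_iff₀ hvR).mp h12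
          have hYlb : 1 / (c + ε) ≤ v R / (X R ω : ℝ) := by
            rw [div_le_div_iff₀ (by positivity) hxpos]
            nlinarith
          have hb : |(if 0 < X R ω then v R / (X R ω : ℝ) else 0) - 1 / c|
              ≤ ε / (c * (c - ε)) := by
            rw [hYval, abs_sub_le_iff]
            constructor
            · have : v R / (X R ω : ℝ) - 1 / c ≤ 1 / (c - ε) - 1 / c := by linarith
              have heq : 1 / (c - ε) - 1 / c = ε / (c * (c - ε)) := by
                rw [div_sub_div _ _ hcε.ne' hc.ne', mul_comm (c - ε) c]
                congr 1
                ring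
              linarith
            · have : 1 / c - v R / (X R ω : ℝ) ≤ 1 / c - 1 / (c + ε) := by linarith
              have heq : 1 / c - 1 / (c + ε) = ε / (c * (c + ε)) := by
                rw [div_sub_div _ _ hc.ne' (by positivity : (c + ε) ≠ 0)]
                congr 1
                ring
              have hle : ε / (c * (c + ε)) ≤ ε / (c * (c - ε)) := by
                apply div_le_div_of_nonneg_left hε.le (by positivity)
                nlinarith
              linarith
          rw [hg]
          linarith
    calc (∫ ω, |(if 0 < X R ω then v R / (X R ω : ℝ) else 0) - 1 / c|)
        ≤ ∫ ω, g ω := integral_mono (hZint R) hgint hptwise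
      _ = ε / (c * (c - ε))
          + ((1 / (c - ε) + 1 / c)
              * (volume {ω : Ω R | ε < |(X R ω : ℝ) / v R - c|}).toReal
            + (v R + 1 / c)
              * (volume {ω : Ω R | (X R ω : ℝ) / v R < c - ε}).toReal) := by
          have i1 : Integrable (fun ω : Ω R =>
              Set.indicator {ω : Ω R | ε < |(X R ω : ℝ) / v R - c|}
                (fun _ => 1 / (c - ε) + 1 / c) ω) volume :=
            (integrable_const _).indicator (hS1 R ε)
          have i2 : Integrable (fun ω : Ω R =>
              Set.indicator {ω : Ω R | (X R ω : ℝ) / v R < c - ε}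
                (fun _ => v R + 1 / c) ω) volume :=
            (integrable_const _).indicator (hS2 R ε)
          have i12 : Integrable (fun ω : Ω R =>
              Set.indicator {ω : Ω R | ε < |(X R ω : ℝ) / v R - c|}
                (fun _ => 1 / (c - ε) + 1 / c) ω
              + Set.indicator {ω : Ω R | (X R ω : ℝ) / v R < c - ε}
                (fun _ => v R + 1 / c) ω) volume := i1.add i2
          simp only [hg]
          rw [integral_add (integrable_const _) i12, integral_add i1 i2,
            integral_indicator_const _ (hS1 R ε),
            integral_indicator_const _ (hS2 R ε), integral_const]
          simp [measure_univ, mul_comm, Measure.real]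
  -- tail terms tend to 0 for each ε ∈ (0, c)
  have tail : ∀ ε, 0 < ε → Tendsto (fun R =>
      (1 / (c - ε) + 1 / c)
        * (volume {ω : Ω R | ε < |(X R ω : ℝ) / v R - c|}).toReal
      + (v R + 1 / c)
        * (volume {ω : Ω R | (X R ω : ℝ) / v R < c - ε}).toReal)
      atTop (𝓝 0) := by
    intro ε hε
    have h1 := (hprob ε hε).const_mul (1 / (c - ε) + 1 / c)
    rw [mul_zero] at h1
    have h2 := hlower ε hε
    -- P2 → 0 by squeeze using v ≥ 1 eventually
    have hP2 : Tendsto (fun R =>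
        (volume {ω : Ω R | (X R ω : ℝ) / v R < c - ε}).toReal) atTop (𝓝 0) := by
      apply squeeze_zero' (Eventually.of_forall fun R => ENNReal.toReal_nonneg)
        ?_ h2
      filter_upwards [hv_top.eventually_ge_atTop 1] with R hR
      exact le_mul_of_one_le_left ENNReal.toReal_nonneg hR
    have h3 : Tendsto (fun R => (v R + 1 / c)
        * (volume {ω : Ω R | (X R ω : ℝ) / v R < c - ε}).toReal) atTop (𝓝 0) := by
      have h4 := h2.add (hP2.const_mul (1 / c))
      simp only [mul_zero, add_zero] at h4
      refine h4.congr fun R => ?_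
      ring
    have := h1.add h3
    rwa [add_zero] at this
  -- the L¹ convergence
  have L1 : Tendsto (fun R =>
      ∫ ω, |(if 0 < X R ω then v R / (X R ω : ℝ) else 0) - 1 / c|)
      atTop (𝓝 0) := by
    rw [Metric.tendsto_nhds]
    intro ε' hε'
    -- choose ε
    set ε : ℝ := min (c / 2) (c ^ 2 * ε' / 8) with hεdef
    have hεpos : 0 < ε := by
      apply lt_min (by positivity) (by positivity)
    have hεc : ε < c := lt_of_le_of_lt (min_le_left _ _) (by linarith)
    have hcε : 0 < c - ε := by linarith
    have hδ : ε / (c * (c - ε)) < ε' / 2 := by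
      have hεhalf : ε ≤ c / 2 := min_le_left _ _
      have hεsmall : ε ≤ c ^ 2 * ε' / 8 := min_le_right _ _
      have h1 : ε / (c * (c - ε)) ≤ 2 * ε / c ^ 2 := by
        rw [div_le_div_iff₀ (by positivity) (by positivity)]
        nlinarith [mul_nonneg (mul_nonneg hεpos.le hc.le) (by linarith : (0:ℝ) ≤ c - 2 * ε)]
      have h2 : 2 * ε / c ^ 2 ≤ ε' / 4 := by
        rw [div_le_iff₀ (by positivity)]
        nlinarith
      linarith
    have htail := Metric.tendsto_nhds.mp (tail ε hεpos) (ε' / 2) (by positivity)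
    filter_upwards [htail] with R hR
    have hnn : 0 ≤ ∫ ω, |(if 0 < X R ω then v R / (X R ω : ℝ) else 0) - 1 / c| :=
      integral_nonneg fun ω => abs_nonneg _
    rw [Real.dist_eq, sub_zero, abs_of_nonneg hnn]
    rw [Real.dist_eq, sub_zero] at hR
    have hkey := key ε hεpos hεc R
    calc (∫ ω, |(if 0 < X R ω then v R / (X R ω : ℝ) else 0) - 1 / c|)
        ≤ ε / (c * (c - ε)) + _ := hkey
      _ ≤ ε / (c * (c - ε)) + |_| := by gcongr; exact le_abs_self _
      _ < ε' / 2 + ε' / 2 := by exact add_lt_add_of_lt_of_lt hδ hR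
      _ = ε' := by ring
  refine ⟨?_, L1⟩
  rw [tendsto_iff_norm_sub_tendsto_zero]
  refine squeeze_zero (fun R => norm_nonneg _) (fun R => ?_) L1
  have heq : (∫ ω, (if 0 < X R ω then v R / (X R ω : ℝ) else 0)) - 1 / c
      = ∫ ω, ((if 0 < X R ω then v R / (X R ω : ℝ) else 0) - 1 / c) := by
    rw [integral_sub (hYint R) (integrable_const _), integral_const]
    simp
  rw [heq]
  refine (norm_integral_le_integral_norm _).trans_eq ?_
  simp only [Real.norm_eq_abs]
end
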